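/- Let p be prime, q a prime power with p ∣ q−1, and ω ∈ 𝔽_q of order p. If f : ℤ/p → 𝔽_q is nonzero with |supp f| = m, and Z' ⊆ ℤ/p is any arithmetic progression of length m, then f̂ does not vanish identically on Z'; i.e., there exists t ∈ Z' with f̂(t) ≠ 0. -/

import Mathlib

/-- The finite-field Fourier transform f̂(t) = p⁻¹ ∑_z ω^{tz} f(z). -/
def dft {p : ℕ} [NeZero p] {F : Type} [Field F] (ω : F) (f : ZMod p → F) :
    ZMod p → F :=
  fun t => (p : F)⁻¹ * ∑ z : ZMod p, ω ^ (t * z).val * f z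

section aux

variable {p : ℕ} [NeZero p] {F : Type} [Field F] {ω : F}

lemma chi_add (hω : orderOf ω = p) (x y : ZMod p) :
    ω ^ (x + y).val = ω ^ x.val * ω ^ y.val := by
  rw [ZMod.val_add,
    show (x.val + y.val) % p = (x.val + y.val) % orderOf ω by rw [hω],
    pow_mod_orderOf, pow_add]

lemma chi_nsmul (hω : orderOf ω = p) (j : ℕ) (y : ZMod p) :
    ω ^ (((j : ZMod p)) * y).val = (ω ^ y.val) ^ j := by
  induction j with
  | zero => simp
  | succ n ih =>
      have : ((n + 1 : ℕ) : ZMod p) * y = (n : ZMod p) * y + y := by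
        push_cast; ring
      rw [this, chi_add hω, ih, pow_succ]

lemma chi_inj (hω : orderOf ω = p) {x y : ZMod p} (h : ω ^ x.val = ω ^ y.val) :
    x = y := by
  have hx : x.val ∈ Set.Iio (orderOf ω) := by rw [hω]; exact ZMod.val_lt x
  have hy : y.val ∈ Set.Iio (orderOf ω) := by rw [hω]; exact ZMod.val_lt y
  have := pow_injOn_Iio_orderOf hx hy h
  exact ZMod.val_injective p this

end aux

theorem stmt10 (p q : ℕ) [Fact p.Prime] (hq : IsPrimePow q) (hpq : p ∣ q - 1)
    {F : Type} [Field F] [Fintype F] (hF : Fintype.card F = q)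
    (ω : F) (hω : orderOf ω = p)
    (f : ZMod p → F) (hf : f ≠ 0) (m : ℕ) (hm : (Function.support f).ncard = m)
    (Z' : Finset (ZMod p)) (a b : ZMod p) (hb : b ≠ 0)
    (hZ' : Z' = (Finset.range m).image fun j : ℕ => a + (j : ZMod p) * b)
    (hcard : Z'.card = m) :
    ∃ t ∈ Z', dft ω f t ≠ 0 := by
  classical
  have hp := (Fact.out : p.Prime)
  -- (p : F) ≠ 0
  have hpF : (p : F) ≠ 0 := by
    intro h0
    have hchar : ringChar F ∣ p := ringChar.dvd h0
    have hcharp : ringChar F = p :=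
      ((hp.eq_one_or_self_of_dvd _ hchar).resolve_left (CharP.ringChar_ne_one (R := F)))
    haveI : CharP F p := hcharp ▸ ringChar.charP F
    obtain ⟨n, -, hcardF⟩ := FiniteField.card F p
    have hdvd : p ∣ q := by
      rw [← hF, hcardF]
      exact dvd_pow_self p n.ne_zero
    have h1 : p ∣ 1 := by
      have hq1 : 1 ≤ q := hq.one_lt.le.trans' (by norm_num)
      have := Nat.dvd_sub hdvd hpq
      rwa [Nat.sub_sub_self (hq.one_lt.le.trans' (by norm_num) : 1 ≤ q)] at this
    exact hp.one_lt.ne' (Nat.dvd_one.mp h1)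
  -- support as Finset
  have hsupfin : (Function.support f).Finite := Set.toFinite _
  set s : Finset (ZMod p) := hsupfin.toFinset with hs
  have hscard : s.card = m := by
    rw [← hm, Set.ncard_eq_toFinset_card _ hsupfin]
  -- m ≥ 1
  have hm1 : 0 < m := by
    rcases Nat.eq_zero_or_pos m with h | h
    · exfalso
      apply hf
      funext z
      have : z ∉ s := by rw [Finset.card_eq_zero.mp (hscard.trans h)]; simp
      simpa [hs, Set.Finite.mem_toFinset] using this
    · exact h
  obtain ⟨e⟩ : Nonempty (Fin m ≃ {x // x ∈ s}) := ⟨(s.equivFinOfCardEq hscard).symm⟩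
  by_contra hcon
  push_neg at hcon
  -- for each j < m : sum over support vanishes
  have key : ∀ j : Fin m,
      ∑ i : Fin m, (ω ^ (a * (e i : ZMod p)).val * f (e i)) *
        (ω ^ (b * (e i : ZMod p)).val) ^ (j : ℕ) = 0 := by
    intro j
    have htmem : a + (j : ℕ) * b ∈ Z' := by
      rw [hZ']; exact Finset.mem_image.mpr ⟨j, Finset.mem_range.mpr j.2, rfl⟩
    have h0 := hcon _ htmem
    unfold dft at h0
    have hsum : ∑ z : ZMod p, ω ^ ((a + (j : ℕ) * b) * z).val * f z = 0 := by
      rcases mul_eq_zero.mp h0 with h | h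
      · exact absurd h (by simpa using hpF)
      · exact h
    -- restrict to support
    have hsum2 : ∑ z ∈ s, ω ^ ((a + (j : ℕ) * b) * z).val * f z = 0 := by
      rw [← hsum]
      apply Finset.sum_subset (Finset.subset_univ s)
      intro z _ hz
      have : f z = 0 := by
        by_contra hzz
        exact hz (by simpa [hs, Set.Finite.mem_toFinset] using hzz)
      simp [this]
    rw [← Finset.sum_coe_sort s (fun z => ω ^ ((a + (j:ℕ) * b) * z).val * f z)] at hsum2
    rw [← Equiv.sum_comp e (fun z : {x // x ∈ s} =>
      ω ^ ((a + (j:ℕ)*b) * (z : ZMod p)).val * f (z : ZMod p))] at hsum2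
    rw [← hsum2]
    apply Finset.sum_congr rfl
    intro i _
    have hexp : (a + (j : ℕ) * b) * (e i : ZMod p)
        = a * (e i : ZMod p) + (j : ℕ) * (b * (e i : ZMod p)) := by ring
    rw [hexp, chi_add hω, chi_nsmul hω]
    ring
  -- Vandermonde: nodes are injective
  have hinj : Function.Injective (fun i : Fin m => ω ^ (b * (e i : ZMod p)).val) := by
    intro i i' h
    have := chi_inj hω h
    have : (e i : ZMod p) = (e i' : ZMod p) := by
      exact mul_left_cancel₀ hb this
    exact e.injective (Subtype.ext this)
  have := Matrix.eq_zero_of_forall_pow_sum_mul_pow_eq_zero hinj key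
  -- pick i, derive contradiction
  have i0 : Fin m := ⟨0, hm1⟩
  have hci := congrFun this i0
  simp only [Pi.zero_apply] at hci
  have hω0 : ω ≠ 0 := by
    intro h
    have h1 : ω ^ p = 1 := hω ▸ pow_orderOf_eq_one ω
    rw [h, zero_pow hp.ne_zero] at h1
    exact zero_ne_one h1
  have hfe : f (e i0) ≠ 0 := hsupfin.mem_toFinset.mp (e i0).2
  rcases mul_eq_zero.mp hci with h | h
  · exact pow_ne_zero _ hω0 h
  · exact hfe h
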